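/- Let n be a positive integer, let G = D_n be the dihedral group of order 2n, and let H ≤ G be a subgroup that does not contain any Klein four-subgroup of G (i.e. no subgroup of H is isomorphic to ℤ/2ℤ × ℤ/2ℤ). Then the restriction map Res : H^3(G, ℤ) → H^3(H, ℤ) is the zero map, where ℤ is a trivial module. -/

import Mathlib

open CategoryTheory groupCohomology

noncomputable section

/-- The map on inhomogeneous cochains (with trivial coefficients `M`) induced by
precomposition with a group homomorphism `f : H →* G`. -/
def trivialCochainsMap (k : Type) [CommRing k] {G H : Type} [Group G] [Group H] (f : H →* G)
    (M : Type) [AddCommGroup M] [Module k M] :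
    inhomogeneousCochains (Rep.trivial k G M) ⟶ inhomogeneousCochains (Rep.trivial k H M) where
  f n := ModuleCat.ofHom ⟨⟨fun φ g => φ (fun i => f (g i)), fun _ _ => rfl⟩, fun _ _ => rfl⟩
  comm' := by
    rintro i j (rfl : i + 1 = j)
    ext φ g
    simp [inhomogeneousCochains.d_hom_apply, CochainComplex.of.d]
    congr 1
    funext j
    congr 2
    funext l
    rcases lt_trichotomy (l : ℕ) (j : ℕ) with h | h | h
    · simp [Fin.contractNth_apply_of_lt, h]
    · simp [Fin.contractNth_apply_of_eq, h, map_mul]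
    · simp [Fin.contractNth_apply_of_gt, h]

/-- The map `Hⁿ(G, M) → Hⁿ(H, M)` (trivial coefficients `M`) induced by a group homomorphism
`f : H →* G`; for `f` the inclusion of a subgroup this is the restriction map `Res`, and for
`f` a quotient map it is inflation. -/
def trivialCohMap (k : Type) [CommRing k] {G H : Type} [Group G] [Group H] (f : H →* G)
    (M : Type) [AddCommGroup M] [Module k M] (n : ℕ) :
    groupCohomology (Rep.trivial k G M) n ⟶ groupCohomology (Rep.trivial k H M) n :=
  HomologicalComplex.homologyMap (trivialCochainsMap k f M) n

end

namespace DRZ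

variable {G : Type} [Group G] {A : Type} [AddCommGroup A]



variable {G : Type} [Group G] {A : Type} [AddCommGroup A]

/-- coboundary of a 1-cochain (sign convention: `w = D1 u` means `w` is a coboundary). -/
def D1 (u : G → A) : G → G → A := fun g h => u (g * h) - u g - u h

/-- differential on 2-cochains. -/
def D2 (v : G → G → A) : G → G → G → A :=
  fun g h k => v h k - v (g * h) k + v g (h * k) - v g h

/-- differential on 3-cochains. -/
def D3 (f : G → G → G → A) : G → G → G → G → A :=
  fun a b c d => f b c d - f (a * b) c d + f a (b * c) d - f a b (c * d) + f a b c

lemma D2_D1 (u : G → A) : D2 (D1 u) = fun _ _ _ => 0 := by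
  funext g h k
  simp only [D1, D2, mul_assoc]
  abel

lemma D3_D2 (v : G → G → A) : D3 (D2 v) = fun _ _ _ _ => 0 := by
  funext a b c d
  simp only [D2, D3, mul_assoc]
  abel

/-- A normalized 2-cocycle. -/
structure Cocyc (G A : Type) [Group G] [AddCommGroup A] where
  w : G → G → A
  cocyc : ∀ g h k : G, w h k - w (g * h) k + w g (h * k) - w g h = 0
  norm : w 1 1 = 0

namespace Cocyc

variable (c : Cocyc G A)

lemma w_one_right (g : G) : c.w g 1 = 0 := by
  have := c.cocyc g 1 1
  simpa [c.norm] using this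

lemma w_one_left (g : G) : c.w 1 g = 0 := by
  have := c.cocyc 1 1 g
  simpa [c.norm] using this

lemma w_inv (g : G) : c.w g⁻¹ g = c.w g g⁻¹ := by
  have := c.cocyc g g⁻¹ g
  simp only [mul_inv_cancel, inv_mul_cancel, c.w_one_right, c.w_one_left] at this
  have h2 : c.w g⁻¹ g - c.w g g⁻¹ = 0 := by linear_combination (norm := abel_nf) this
  exact sub_eq_zero.mp h2

/-- The central extension of `G` by `A` determined by the 2-cocycle `c`. -/
@[ext] structure Ext (c : Cocyc G A) where
  a : A
  g : G

lemma wassoc (x y z : G) : c.w (x * y) z = c.w y z + c.w x (y * z) - c.w x y := by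
  have h := c.cocyc x y z
  linear_combination (norm := abel_nf) -h

instance : Group c.Ext where
  mul x y := ⟨x.a + y.a + c.w x.g y.g, x.g * y.g⟩
  one := ⟨0, 1⟩
  inv x := ⟨-x.a - c.w x.g x.g⁻¹, x.g⁻¹⟩
  mul_assoc x y z := by
    refine Ext.ext ?_ (mul_assoc _ _ _)
    show x.a + y.a + c.w x.g y.g + z.a + c.w (x.g * y.g) z.g
        = x.a + (y.a + z.a + c.w y.g z.g) + c.w x.g (y.g * z.g)
    rw [c.wassoc]
    abel
  one_mul x := by
    refine Ext.ext ?_ (one_mul _)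
    show 0 + x.a + c.w 1 x.g = x.a
    rw [c.w_one_left]; abel
  mul_one x := by
    refine Ext.ext ?_ (mul_one _)
    show x.a + 0 + c.w x.g 1 = x.a
    rw [c.w_one_right]; abel
  inv_mul_cancel x := by
    refine Ext.ext ?_ (inv_mul_cancel _)
    show -x.a - c.w x.g x.g⁻¹ + x.a + c.w x.g⁻¹ x.g = 0
    rw [c.w_inv]; abel

/-- The projection from the extension to `G`. -/
def π : c.Ext →* G where
  toFun x := x.g
  map_one' := rfl
  map_mul' _ _ := rfl

lemma mul_def (x y : c.Ext) : x * y = ⟨x.a + y.a + c.w x.g y.g, x.g * y.g⟩ := rfl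
lemma one_def : (1 : c.Ext) = ⟨0, 1⟩ := rfl
@[simp] lemma π_apply (x : c.Ext) : c.π x = x.g := rfl

lemma g_pow (x : c.Ext) (k : ℕ) : (x ^ k).g = x.g ^ k := map_pow c.π x k

lemma fst_pow (a : A) (x : G) (k : ℕ) :
    ((Ext.mk a x : c.Ext) ^ k).a = k • a + ((Ext.mk (0 : A) x : c.Ext) ^ k).a := by
  induction k with
  | zero => simp [one_def]
  | succ k ih =>
      rw [pow_succ, pow_succ, mul_def, mul_def, ih]
      rw [c.g_pow, c.g_pow]
      rw [succ_nsmul]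
      abel_nf; exact congrArg (k • a + ·) (add_left_comm _ _ _)

/-- Elements of the kernel are central. -/
lemma central_ker (e : c.Ext) (he : e.g = 1) (y : c.Ext) : e * y = y * e := by
  rw [mul_def, mul_def, he, c.w_one_left, c.w_one_right]
  refine Ext.ext ?_ (by rw [one_mul, mul_one])
  show e.a + y.a + 0 = y.a + e.a + 0
  abel

/-- Lifting elements with prescribed order, assuming divisibility of `A`. -/
lemma hlift (hdiv : ∀ (k : ℕ), k ≠ 0 → ∀ a : A, ∃ b, k • b = a)
    (x : G) (k : ℕ) (hk : k ≠ 0) (hx : x ^ k = 1) :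
    ∃ e : c.Ext, c.π e = x ∧ e ^ k = 1 := by
  obtain ⟨b, hb⟩ := hdiv k hk ((Ext.mk (0 : A) x : c.Ext) ^ k).a
  refine ⟨⟨-b, x⟩, rfl, ?_⟩
  refine Ext.ext ?_ ?_
  · rw [c.fst_pow, ← hb]; show k • (-b) + k • b = (1 : c.Ext).a; rw [one_def]; simp
  · rw [c.g_pow, hx]; rfl

end Cocyc




lemma cyclic_lift {C E G' : Type} [Group C] [Finite C] [IsCyclic C] [Group E] [Group G']
    (π : E →* G') (j : C →* G')
    (hlift : ∀ (x : G') (k : ℕ), k ≠ 0 → x ^ k = 1 → ∃ e : E, π e = x ∧ e ^ k = 1) :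
    ∃ σ : C →* E, ∀ x, π (σ x) = j x := by
  have hm0 : Nat.card C ≠ 0 := Nat.card_pos.ne'
  haveI : NeZero (Nat.card C) := ⟨hm0⟩
  let eqv := zmodCyclicMulEquiv (inferInstance : IsCyclic C)
  set g₀ : C := eqv (Multiplicative.ofAdd (1 : ZMod (Nat.card C))) with hg₀def
  have hg₀ : (j g₀) ^ Nat.card C = 1 := by rw [← map_pow, pow_card_eq_one', map_one]
  obtain ⟨e, he1, he2⟩ := hlift (j g₀) _ hm0 hg₀
  have hfm : (zmultiplesHom (Additive E) (Additive.ofMul e)) ((Nat.card C : ℤ)) = 0 := by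
    show ((Nat.card C : ℤ) • Additive.ofMul e) = 0
    rw [← ofMul_zpow, zpow_natCast, he2]; rfl
  let φ : ZMod (Nat.card C) →+ Additive E := ZMod.lift (Nat.card C) ⟨_, hfm⟩
  let σ₀ : Multiplicative (ZMod (Nat.card C)) →* E := AddMonoidHom.toMultiplicativeLeft φ
  have key : ∀ k : ℕ, σ₀ (Multiplicative.ofAdd ((k : ZMod (Nat.card C)))) = e ^ k := by
    intro k
    have h1 : ((k : ℤ) : ZMod (Nat.card C)) = ((k : ℕ) : ZMod (Nat.card C)) := by push_cast; ring
    have h2 : φ ((k : ℕ) : ZMod (Nat.card C)) = (k : ℤ) • Additive.ofMul e := by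
      rw [← h1, ZMod.lift_coe]
      rfl
    show Additive.toMul (φ (Multiplicative.toAdd (Multiplicative.ofAdd ((k : ℕ) : ZMod (Nat.card C))))) = e ^ k
    rw [toAdd_ofAdd, h2]
    show Additive.toMul ((k : ℤ) • Additive.ofMul e) = e ^ k
    rw [toMul_zsmul, toMul_ofMul, zpow_natCast]
  refine ⟨σ₀.comp eqv.symm.toMonoidHom, ?_⟩
  intro x
  set z := eqv.symm x with hzdef
  set k := (Multiplicative.toAdd z).val with hkdef
  have hz : z = Multiplicative.ofAdd ((k : ZMod (Nat.card C))) := by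
    rw [hkdef, ZMod.natCast_rightInverse (Multiplicative.toAdd z), ofAdd_toAdd]
  have hone : ((k : ZMod (Nat.card C))) = k • (1 : ZMod (Nat.card C)) := by
    rw [nsmul_eq_mul, mul_one]
  have hgk : g₀ ^ k = x := by
    rw [hg₀def, ← map_pow, ← ofAdd_nsmul, ← hone, ← hz, hzdef, eqv.apply_symm_apply]
  show π (σ₀ (eqv.symm x)) = j x
  rw [← hzdef, hz, key, map_pow, he1, ← map_pow, hgk]


lemma Cocyc.split_of_isCyclic [Finite G] [IsCyclic G]
    (c : Cocyc G A) (hdiv : ∀ (k : ℕ), k ≠ 0 → ∀ a : A, ∃ b, k • b = a) :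
    ∃ u : G → A, ∀ g h, c.w g h = u (g * h) - u g - u h := by
  obtain ⟨σ, hσ⟩ := cyclic_lift c.π (MonoidHom.id G) (fun x k hk hx => c.hlift hdiv x k hk hx)
  refine ⟨fun g => (σ g).a, fun g h => ?_⟩
  have hg : ∀ x : G, (σ x).g = x := fun x => by have := hσ x; simpa using this
  have hmul := congrArg Ext.a (map_mul σ g h).symm
  rw [c.mul_def] at hmul
  simp only [hg] at hmul
  -- hmul : (σ g).a + (σ h).a + c.w g h = (σ (g * h)).a
  linear_combination (norm := abel_nf) hmul

lemma Cocyc.split_dihedral [Finite G]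
    (c : Cocyc G A) (hdiv : ∀ (k : ℕ), k ≠ 0 → ∀ a : A, ∃ b, k • b = a)
    (K : Subgroup G) [IsCyclic K] (hodd : Odd (Nat.card K))
    (s₀ : G) (hs : s₀ * s₀ = 1)
    (hconj : ∀ k : G, k ∈ K → s₀ * k * s₀ = k⁻¹)
    (hcover : ∀ g : G, g ∈ K ∨ g * s₀ ∈ K) :
    ∃ u : G → A, ∀ g h, c.w g h = u (g * h) - u g - u h := by
  obtain ⟨ψ, hψ⟩ := cyclic_lift c.π K.subtype (fun x k hk hx => c.hlift hdiv x k hk hx)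
  have hψg : ∀ k : K, (ψ k).g = (k : G) := fun k => by have := hψ k; simpa using this
  obtain ⟨sh, hsh1, hsh2⟩ := c.hlift hdiv s₀ 2 (by norm_num) (by rw [pow_two, hs])
  have hshg : sh.g = s₀ := hsh1
  have hshsh : sh * sh = 1 := by rw [← pow_two]; exact hsh2
  have hshinv : sh⁻¹ = sh := inv_eq_of_mul_eq_one_right hshsh
  have hs₀inv : s₀⁻¹ = s₀ := inv_eq_of_mul_eq_one_right hs
  -- commutativity of K
  obtain ⟨gk, hgk⟩ := IsCyclic.exists_generator (α := K)
  have hcomm : ∀ a b : K, a * b = b * a := by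
    intro a b
    obtain ⟨i, hi⟩ := hgk a
    obtain ⟨l, hl⟩ := hgk b
    rw [← hi, ← hl, ← zpow_add, ← zpow_add, add_comm]
  have hψcomm : ∀ k1 k2 : K, ψ k1 * ψ k2 = ψ k2 * ψ k1 := by
    intro k1 k2; rw [← map_mul, ← map_mul, hcomm]
  -- the obstruction homomorphism d
  set dd : K → c.Ext := fun k => sh * ψ k * sh⁻¹ * ψ k with hdd
  have hdg : ∀ k : K, (dd k).g = 1 := by
    intro k
    simp only [hdd]
    have : (sh * ψ k * sh⁻¹ * ψ k).g = sh.g * (ψ k).g * sh.g⁻¹ * (ψ k).g := by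
      simp only [← c.π_apply, map_mul, map_inv]
    rw [this, hψg, hshg, hs₀inv, hconj (k : G) k.2, inv_mul_cancel]
  have hdcen : ∀ (k : K) (y : c.Ext), dd k * y = y * dd k := fun k y =>
    c.central_ker _ (hdg k) y
  have hconjE : ∀ k : K, sh * ψ k * sh⁻¹ = dd k * (ψ k)⁻¹ := by
    intro k; simp only [hdd]; group
  have hdmul : ∀ k1 k2 : K, dd (k1 * k2) = dd k1 * dd k2 := by
    intro k1 k2
    have e1 : dd (k1 * k2) = (sh * ψ k1 * sh⁻¹) * (sh * ψ k2 * sh⁻¹) * (ψ k1 * ψ k2) := by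
      simp only [hdd, map_mul]; group
    rw [e1, hconjE k1, hconjE k2]
    -- goal: dd k1 * (ψ k1)⁻¹ * (dd k2 * (ψ k2)⁻¹) * (ψ k1 * ψ k2) = dd k1 * dd k2
    have swap1 : (ψ k1)⁻¹ * (dd k2 * ((ψ k2)⁻¹ * (ψ k1 * ψ k2)))
        = dd k2 * ((ψ k1)⁻¹ * ((ψ k2)⁻¹ * (ψ k1 * ψ k2))) := by
      rw [← mul_assoc, ← hdcen k2, mul_assoc]
    have swap2 : (ψ k2)⁻¹ * (ψ k1 * ψ k2) = ψ k1 := by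
      rw [hψcomm k1 k2, ← mul_assoc, inv_mul_cancel, one_mul]
    calc dd k1 * (ψ k1)⁻¹ * (dd k2 * (ψ k2)⁻¹) * (ψ k1 * ψ k2)
        = dd k1 * ((ψ k1)⁻¹ * (dd k2 * ((ψ k2)⁻¹ * (ψ k1 * ψ k2)))) := by group
      _ = dd k1 * (dd k2 * ((ψ k1)⁻¹ * ((ψ k2)⁻¹ * (ψ k1 * ψ k2)))) := by rw [swap1]
      _ = dd k1 * (dd k2 * ((ψ k1)⁻¹ * ψ k1)) := by rw [swap2]
      _ = dd k1 * dd k2 := by rw [inv_mul_cancel, mul_one]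
  have hdone : dd 1 = 1 := by
    simp only [hdd, map_one, mul_one]; rw [mul_inv_cancel]
  have hdpow : ∀ (N : ℕ) (k : K), dd (k ^ N) = dd k ^ N := by
    intro N k
    induction N with
    | zero => simpa using hdone
    | succ N ih => rw [pow_succ, pow_succ, hdmul, ih]
  have hddm : ∀ k : K, dd k ^ (Nat.card K) = 1 := by
    intro k
    rw [← hdpow, pow_card_eq_one', hdone]
  -- the correction ε
  obtain ⟨t, ht⟩ := hodd
  set ε : K → c.Ext := fun k => dd k ^ t with hε
  have hεg : ∀ k : K, (ε k).g = 1 := by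
    intro k; simp only [hε]; rw [c.g_pow, hdg, one_pow]
  have hεcen : ∀ (k : K) (y : c.Ext), ε k * y = y * ε k := fun k y =>
    c.central_ker _ (hεg k) y
  have hεmul : ∀ k1 k2 : K, ε (k1 * k2) = ε k1 * ε k2 := by
    intro k1 k2
    simp only [hε]
    rw [hdmul]
    exact Commute.mul_pow (hdcen k1 (dd k2)) t
  -- the corrected section on K
  set ψt : K → c.Ext := fun k => ε k * ψ k with hψt
  have hψtg : ∀ k : K, (ψt k).g = (k : G) := by
    intro k
    simp only [hψt]
    have : (ε k * ψ k).g = (ε k).g * (ψ k).g := by simp only [← c.π_apply, map_mul]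
    rw [this, hεg, hψg, one_mul]
  have hψtmul : ∀ k1 k2 : K, ψt (k1 * k2) = ψt k1 * ψt k2 := by
    intro k1 k2
    simp only [hψt]
    rw [hεmul, map_mul]
    calc ε k1 * ε k2 * (ψ k1 * ψ k2) = ε k1 * (ε k2 * ψ k1) * ψ k2 := by group
      _ = ε k1 * (ψ k1 * ε k2) * ψ k2 := by rw [hεcen k2 (ψ k1)]
      _ = (ε k1 * ψ k1) * (ε k2 * ψ k2) := by group
  have hψtone : ψt 1 = 1 := by
    simp only [hψt]
    have h1 : ε 1 = 1 := by simp only [hε]; rw [hdone, one_pow]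
    rw [h1, map_one, one_mul]
  have hψtinv : ∀ k : K, ψt k⁻¹ = (ψt k)⁻¹ := by
    intro k
    have h1 := hψtmul k k⁻¹
    rw [mul_inv_cancel, hψtone] at h1
    exact (inv_eq_of_mul_eq_one_right h1.symm).symm
  -- key relation
  have hkey : ∀ k : K, sh * ψt k = (ψt k)⁻¹ * sh := by
    intro k
    have hm1 : ε k * ε k * dd k = 1 := by
      have : dd k ^ (t + t + 1) = 1 := by
        have h2 : t + t + 1 = Nat.card K := by omega
        rw [h2]; exact hddm k
      calc ε k * ε k * dd k = dd k ^ (t + t + 1) := by simp only [hε]; group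
        _ = 1 := this
    -- sh * ψt k * sh⁻¹ = ε k * dd k * (ψ k)⁻¹ and (ψt k)⁻¹ = (ψ k)⁻¹ * (ε k)⁻¹
    have e1 : sh * ψt k * sh⁻¹ = ε k * (dd k * (ψ k)⁻¹) := by
      simp only [hψt]
      rw [← hconjE k]
      calc sh * (ε k * ψ k) * sh⁻¹ = (sh * ε k) * ψ k * sh⁻¹ := by group
        _ = (ε k * sh) * ψ k * sh⁻¹ := by rw [hεcen k sh]
        _ = ε k * (sh * ψ k * sh⁻¹) := by group
    have e2 : ε k * (dd k * (ψ k)⁻¹) = (ψt k)⁻¹ := by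
      simp only [hψt]
      rw [mul_inv_rev]
      -- goal: ε k * (dd k * (ψ k)⁻¹) = (ψ k)⁻¹ * (ε k)⁻¹
      have : (ψ k)⁻¹ * (ε k)⁻¹ = (ε k)⁻¹ * (ψ k)⁻¹ := by
        have h := hεcen k (ψ k)
        calc (ψ k)⁻¹ * (ε k)⁻¹ = (ε k * ψ k)⁻¹ := by rw [mul_inv_rev]
          _ = (ψ k * ε k)⁻¹ := by rw [h]
          _ = (ε k)⁻¹ * (ψ k)⁻¹ := by rw [mul_inv_rev]
      rw [this]
      have h3 : ε k * dd k = (ε k)⁻¹ := by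
        have h4 := congrArg (fun z => (ε k)⁻¹ * z) hm1
        simpa [mul_assoc] using h4
      rw [← mul_assoc, h3]
    have := e1.trans e2
    calc sh * ψt k = (sh * ψt k * sh⁻¹) * sh := by group
      _ = (ψt k)⁻¹ * sh := by rw [this]
  -- the section on all of G
  classical
  set σ : G → c.Ext := fun g =>
    if hg : g ∈ K then ψt ⟨g, hg⟩ else ψt ⟨g * s₀, (hcover g).resolve_left hg⟩ * sh with hσ
  have hσg : ∀ g : G, (σ g).g = g := by
    intro g
    simp only [hσ]
    by_cases hg : g ∈ K
    · simp only [dif_pos hg]; rw [hψtg]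
    · simp only [dif_neg hg]
      have : (ψt ⟨g * s₀, (hcover g).resolve_left hg⟩ * sh).g
          = (ψt ⟨g * s₀, (hcover g).resolve_left hg⟩).g * sh.g := by
        simp only [← c.π_apply, map_mul]
      rw [this, hψtg, hshg]
      show g * s₀ * s₀ = g
      rw [mul_assoc, hs, mul_one]
  -- reflections square to one
  have hrefl : ∀ h : G, h ∉ K → h * h = 1 := by
    intro h hh
    have hk := (hcover h).resolve_left hh
    have := hconj _ hk
    -- s₀ * (h * s₀) * s₀ = (h * s₀)⁻¹
    rw [mul_inv_rev, hs₀inv] at this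
    -- s₀ * (h * s₀) * s₀ = s₀ * h⁻¹
    have h2 : s₀ * h = s₀ * h⁻¹ := by
      calc s₀ * h = s₀ * (h * s₀) * s₀ := by rw [mul_assoc, mul_assoc, hs, mul_one]
      _ = s₀ * h⁻¹ := this
    have h3 : h = h⁻¹ := mul_left_cancel h2
    nth_rewrite 1 [h3]
    rw [inv_mul_cancel]
  have hσmul : ∀ g h : G, σ (g * h) = σ g * σ h := by
    intro g h
    by_cases hg : g ∈ K <;> by_cases hh : h ∈ K
    · have hgh : g * h ∈ K := mul_mem hg hh
      simp only [hσ]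
      simp only [dif_pos hg, dif_pos hh, dif_pos hgh]
      have : (⟨g * h, hgh⟩ : K) = ⟨g, hg⟩ * ⟨h, hh⟩ := rfl
      rw [this, hψtmul]
    · have hgh : g * h ∉ K := fun hmem => hh (by
        have : h = g⁻¹ * (g * h) := by group
        rw [this]; exact mul_mem (inv_mem hg) hmem)
      have hhs : h * s₀ ∈ K := (hcover h).resolve_left hh
      have hghs : g * h * s₀ ∈ K := by rw [mul_assoc]; exact mul_mem hg hhs
      simp only [hσ]
      simp only [dif_pos hg, dif_neg hh, dif_neg hgh]
      have e : (⟨g * h * s₀, by rw [mul_assoc]; exact mul_mem hg hhs⟩ : K)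
          = ⟨g, hg⟩ * ⟨h * s₀, hhs⟩ := by
        apply Subtype.ext; show g * h * s₀ = g * (h * s₀); rw [mul_assoc]
      have e' : (⟨g * h * s₀, (hcover (g*h)).resolve_left hgh⟩ : K)
          = ⟨g, hg⟩ * ⟨h * s₀, hhs⟩ := e
      rw [e', hψtmul, mul_assoc]
    · -- g ∉ K, h ∈ K
      have hgh : g * h ∉ K := fun hmem => hg (by
        have : g = (g * h) * h⁻¹ := by group
        rw [this]; exact mul_mem hmem (inv_mem hh))
      have hgs : g * s₀ ∈ K := (hcover g).resolve_left hg
      simp only [hσ]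
      simp only [dif_neg hg, dif_pos hh, dif_neg hgh]
      have e' : (⟨g * h * s₀, (hcover (g*h)).resolve_left hgh⟩ : K)
          = ⟨g * s₀, hgs⟩ * (⟨h, hh⟩ : K)⁻¹ := by
        apply Subtype.ext
        show g * h * s₀ = (g * s₀) * h⁻¹
        rw [← hconj h hh]
        calc g * h * s₀ = g * (s₀ * s₀) * h * s₀ := by rw [hs, mul_one]
          _ = g * s₀ * (s₀ * h * s₀) := by group
      rw [e', hψtmul]
      rw [hψtinv]
      calc ψt ⟨g * s₀, hgs⟩ * (ψt ⟨h, hh⟩)⁻¹ * sh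
          = ψt ⟨g * s₀, hgs⟩ * ((ψt ⟨h, hh⟩)⁻¹ * sh) := by group
        _ = ψt ⟨g * s₀, hgs⟩ * (sh * ψt ⟨h, hh⟩) := by rw [← hkey]
        _ = ψt ⟨g * s₀, hgs⟩ * sh * ψt ⟨h, hh⟩ := by group
    · -- g ∉ K, h ∉ K
      have hgs : g * s₀ ∈ K := (hcover g).resolve_left hg
      have hhs : h * s₀ ∈ K := (hcover h).resolve_left hh
      have hinvh : h⁻¹ = h := inv_eq_of_mul_eq_one_right (hrefl h hh)
      have hsh : s₀ * h = (h * s₀)⁻¹ := by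
        rw [mul_inv_rev, hs₀inv, hinvh]
      have hgh : g * h ∈ K := by
        have : g * h = (g * s₀) * (s₀ * h) := by
          rw [mul_assoc, ← mul_assoc s₀, hs, one_mul]
        rw [this, hsh]
        exact mul_mem hgs (inv_mem hhs)
      simp only [hσ]
      simp only [dif_neg hg, dif_neg hh, dif_pos hgh]
      have e' : (⟨g * h, hgh⟩ : K) = ⟨g * s₀, hgs⟩ * (⟨h * s₀, hhs⟩ : K)⁻¹ := by
        apply Subtype.ext
        show g * h = (g * s₀) * (h * s₀)⁻¹
        rw [← hsh]
        rw [mul_assoc, ← mul_assoc s₀, hs, one_mul]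
      rw [e', hψtmul]
      rw [hψtinv]
      calc ψt ⟨g * s₀, hgs⟩ * (ψt ⟨h * s₀, hhs⟩)⁻¹
          = ψt ⟨g * s₀, hgs⟩ * ((ψt ⟨h * s₀, hhs⟩)⁻¹ * sh) * sh⁻¹ := by group
        _ = ψt ⟨g * s₀, hgs⟩ * (sh * ψt ⟨h * s₀, hhs⟩) * sh⁻¹ := by rw [← hkey]
        _ = ψt ⟨g * s₀, hgs⟩ * sh * (ψt ⟨h * s₀, hhs⟩ * sh⁻¹) := by group
        _ = ψt ⟨g * s₀, hgs⟩ * sh * (ψt ⟨h * s₀, hhs⟩ * sh) := by rw [hshinv]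
  -- conclude
  refine ⟨fun g => (σ g).a, fun g h => ?_⟩
  have hmul := congrArg Ext.a (hσmul g h).symm
  rw [c.mul_def] at hmul
  simp only [hσg] at hmul
  linear_combination (norm := abel_nf) hmul


/-- The circle group `ℝ/ℤ`. -/
abbrev Circ : Type := AddCircle (1 : ℝ)

/-- The projection `ℝ → ℝ/ℤ`. -/
def pq : ℝ →+ Circ := QuotientAddGroup.mk' (AddSubgroup.zmultiples (1 : ℝ))

lemma pq_surj : Function.Surjective pq := QuotientAddGroup.mk'_surjective _

lemma pq_int (k : ℤ) : pq (k : ℝ) = 0 := by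
  rw [pq, QuotientAddGroup.mk'_apply, QuotientAddGroup.eq_zero_iff]
  exact ⟨k, by simp⟩

lemma pq_ker {x : ℝ} (hx : pq x = 0) : ∃ k : ℤ, x = (k : ℝ) := by
  rw [pq, QuotientAddGroup.mk'_apply, QuotientAddGroup.eq_zero_iff] at hx
  obtain ⟨k, hk⟩ := hx
  exact ⟨k, by simpa using hk.symm⟩

lemma circ_div (k : ℕ) (hk : k ≠ 0) (a : Circ) : ∃ b : Circ, k • b = a := by
  obtain ⟨x, hx⟩ := pq_surj a
  refine ⟨pq (x / k), ?_⟩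
  rw [← map_nsmul, nsmul_eq_mul, mul_div_cancel₀ _ (by exact_mod_cast hk : (k:ℝ) ≠ 0), hx]

/-- Averaging: over `ℝ`, every 3-cocycle on a finite group is a coboundary. -/
lemma avg [Fintype G] (f : G → G → G → ℝ) (hf : ∀ a b c d : G, D3 f a b c d = 0) :
    ∀ g h k : G, D2 (fun g h => -((∑ x : G, f g h x) / (Fintype.card G))) g h k = f g h k := by
  intro g h k
  have hN : ((Fintype.card G : ℝ)) ≠ 0 := by
    exact_mod_cast (Fintype.card_pos).ne'
  have hshift : ∑ x : G, f g h (k * x) = ∑ x : G, f g h x :=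
    Fintype.sum_equiv (Equiv.mulLeft k) _ _ (fun x => rfl)
  have hzero : ∑ x : G, (f h k x - f (g * h) k x + f g (h * k) x - f g h (k * x) + f g h k)
      = 0 := Finset.sum_eq_zero (fun x _ => hf g h k x)
  have hsplit : ∑ x : G, (f h k x - f (g * h) k x + f g (h * k) x - f g h (k * x) + f g h k)
      = (∑ x : G, f h k x) - (∑ x : G, f (g * h) k x) + (∑ x : G, f g (h * k) x)
        - (∑ x : G, f g h x) + (Fintype.card G : ℝ) * f g h k := by
    rw [Finset.sum_add_distrib, Finset.sum_sub_distrib, Finset.sum_add_distrib,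
      Finset.sum_sub_distrib, hshift, Finset.sum_const]
    simp [nsmul_eq_mul, Finset.card_univ]
  rw [hsplit] at hzero
  simp only [D2]
  have key : -(∑ x : G, f h k x) - -(∑ x : G, f (g * h) k x) + -(∑ x : G, f g (h * k) x)
      - -(∑ x : G, f g h x) = (Fintype.card G : ℝ) * f g h k := by linarith [hzero]
  calc -((∑ x : G, f h k x) / (Fintype.card G)) - -((∑ x : G, f (g * h) k x) / (Fintype.card G))
        + -((∑ x : G, f g (h * k) x) / (Fintype.card G))
        - -((∑ x : G, f g h x) / (Fintype.card G))
      = (-(∑ x : G, f h k x) - -(∑ x : G, f (g * h) k x) + -(∑ x : G, f g (h * k) x)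
          - -(∑ x : G, f g h x)) / (Fintype.card G) := by ring
    _ = ((Fintype.card G : ℝ) * f g h k) / (Fintype.card G) := by rw [key]
    _ = f g h k := by field_simp

/-- A group `G` "splits": every `ℝ/ℤ`-valued 2-cocycle on `G` is a coboundary. -/
def Splits (G : Type) [Group G] : Prop :=
  ∀ w : G → G → Circ, (∀ g h k : G, w h k - w (g * h) k + w g (h * k) - w g h = 0) →
    ∃ u : G → Circ, ∀ g h, w g h = u (g * h) - u g - u h

/-- Main concrete reduction: if `G` splits, every integral 3-cocycle is an
integral coboundary. -/
lemma int_cobound [Fintype G] (hS : Splits G) (f : G → G → G → ℤ)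
    (hf : ∀ a b c d : G, D3 f a b c d = 0) :
    ∃ U : G → G → ℤ, ∀ g h k, D2 U g h k = f g h k := by
  classical
  set fR : G → G → G → ℝ := fun a b c => (f a b c : ℝ) with hfR
  have hfR3 : ∀ a b c d : G, D3 fR a b c d = 0 := by
    intro a b c d
    have := hf a b c d
    simp only [D3, hfR] at this ⊢
    exact_mod_cast congrArg (fun z : ℤ => (z : ℝ)) this
  set v : G → G → ℝ := fun g h => -((∑ x : G, fR g h x) / (Fintype.card G)) with hv
  have hD2v : ∀ g h k : G, D2 v g h k = fR g h k := fun g h k => avg fR hfR3 g h k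
  set w : G → G → Circ := fun g h => pq (v g h) with hw
  have hwcoc : ∀ g h k : G, w h k - w (g * h) k + w g (h * k) - w g h = 0 := by
    intro g h k
    have : w h k - w (g * h) k + w g (h * k) - w g h = pq (D2 v g h k) := by
      simp only [hw, D2, map_add, map_sub]
    rw [this, hD2v]
    exact pq_int (f g h k)
  obtain ⟨u, hu⟩ := hS w hwcoc
  set ut : G → ℝ := fun g => Classical.choose (pq_surj (u g)) with hut
  have hutp : ∀ g, pq (ut g) = u g := fun g => Classical.choose_spec (pq_surj (u g))
  have hker : ∀ g h : G, ∃ z : ℤ, v g h - (ut (g * h) - ut g - ut h) = (z : ℝ) := by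
    intro g h
    apply pq_ker
    rw [map_sub, map_sub, map_sub, hutp, hutp, hutp]
    have hfold : pq (v g h) = w g h := rfl
    rw [hfold, hu g h]
    abel
  set U : G → G → ℤ := fun g h => Classical.choose (hker g h) with hU
  have hUp : ∀ g h : G, (U g h : ℝ) = v g h - (ut (g * h) - ut g - ut h) :=
    fun g h => (Classical.choose_spec (hker g h)).symm
  refine ⟨U, fun g h k => ?_⟩
  have hcast : ((D2 U g h k : ℤ) : ℝ) = ((f g h k : ℤ) : ℝ) := by
    have hD21 : D1 ut h k - D1 ut (g * h) k + D1 ut g (h * k) - D1 ut g h = 0 := by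
      have := congrFun (congrFun (congrFun (D2_D1 ut) g) h) k
      simpa [D2] using this
    have hD2v' : v h k - v (g * h) k + v g (h * k) - v g h = fR g h k := by
      have := hD2v g h k; simpa [D2] using this
    simp only [D2]
    push_cast
    rw [hUp, hUp, hUp, hUp]
    simp only [D1] at hD21
    linear_combination hD2v' - hD21
  exact_mod_cast hcast

lemma tail2 (g : Fin 3 → G) : (fun i : Fin 2 => g i.succ) = ![g 1, g 2] := by
  funext i; fin_cases i <;> rfl

lemma tail3 (g : Fin 4 → G) : (fun i : Fin 3 => g i.succ) = ![g 1, g 2, g 3] := by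
  funext i; fin_cases i <;> rfl

lemma contract3_0 (g : Fin 3 → G) : Fin.contractNth 0 (· * ·) g = ![g 0 * g 1, g 2] := by
  funext i; fin_cases i
  · exact Fin.contractNth_apply_of_eq _ _ _ _ rfl
  · exact Fin.contractNth_apply_of_gt _ _ _ _ (by norm_num)

lemma contract3_1 (g : Fin 3 → G) : Fin.contractNth 1 (· * ·) g = ![g 0, g 1 * g 2] := by
  funext i; fin_cases i
  · exact Fin.contractNth_apply_of_lt _ _ _ _ (by norm_num)
  · exact Fin.contractNth_apply_of_eq _ _ _ _ rfl

lemma contract3_2 (g : Fin 3 → G) : Fin.contractNth 2 (· * ·) g = ![g 0, g 1] := by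
  funext i; fin_cases i
  · exact Fin.contractNth_apply_of_lt _ _ _ _ (by norm_num)
  · exact Fin.contractNth_apply_of_lt _ _ _ _ (by norm_num)

lemma contract4_0 (g : Fin 4 → G) : Fin.contractNth 0 (· * ·) g = ![g 0 * g 1, g 2, g 3] := by
  funext i; fin_cases i
  · exact Fin.contractNth_apply_of_eq _ _ _ _ rfl
  · exact Fin.contractNth_apply_of_gt _ _ _ _ (by norm_num)
  · exact Fin.contractNth_apply_of_gt _ _ _ _ (by norm_num)

lemma contract4_1 (g : Fin 4 → G) : Fin.contractNth 1 (· * ·) g = ![g 0, g 1 * g 2, g 3] := by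
  funext i; fin_cases i
  · exact Fin.contractNth_apply_of_lt _ _ _ _ (by norm_num)
  · exact Fin.contractNth_apply_of_eq _ _ _ _ rfl
  · exact Fin.contractNth_apply_of_gt _ _ _ _ (by norm_num)

lemma contract4_2 (g : Fin 4 → G) : Fin.contractNth 2 (· * ·) g = ![g 0, g 1, g 2 * g 3] := by
  funext i; fin_cases i
  · exact Fin.contractNth_apply_of_lt _ _ _ _ (by norm_num)
  · exact Fin.contractNth_apply_of_lt _ _ _ _ (by norm_num)
  · exact Fin.contractNth_apply_of_eq _ _ _ _ rfl

lemma contract4_3 (g : Fin 4 → G) : Fin.contractNth 3 (· * ·) g = ![g 0, g 1, g 2] := by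
  funext i; fin_cases i
  · exact Fin.contractNth_apply_of_lt _ _ _ _ (by decide)
  · exact Fin.contractNth_apply_of_lt _ _ _ _ (by decide)
  · exact Fin.contractNth_apply_of_lt _ _ _ _ (by decide)

lemma d2_eval (v : (Fin 2 → G) → ℤ) (g : Fin 3 → G) :
    inhomogeneousCochains.d (Rep.trivial ℤ G ℤ) 2 v g
      = D2 (fun a b => v ![a, b]) (g 0) (g 1) (g 2) := by
  rw [inhomogeneousCochains.d_hom_apply]
  rw [Fin.sum_univ_three]
  simp only [Rep.trivial_ρ_apply]
  rw [tail2, contract3_0, contract3_1, contract3_2]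
  simp only [D2]
  push_cast
  norm_num
  abel

lemma d3_eval (v : (Fin 3 → G) → ℤ) (g : Fin 4 → G) :
    inhomogeneousCochains.d (Rep.trivial ℤ G ℤ) 3 v g
      = D3 (fun a b c => v ![a, b, c]) (g 0) (g 1) (g 2) (g 3) := by
  rw [inhomogeneousCochains.d_hom_apply]
  rw [Fin.sum_univ_four]
  simp only [Rep.trivial_ρ_apply]
  rw [tail3, contract4_0, contract4_1, contract4_2, contract4_3]
  simp only [D3]
  have h3 : (((3 : Fin 4)) : ℕ) = 3 := rfl
  rw [h3]
  push_cast
  norm_num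
  abel

/-- A homomorphism from `ℤ/2` determined by an element of square one. -/
lemma hom_of_sq_one {M : Type} [Group M] (x : M) (hx : x * x = 1) :
    ∃ f : Multiplicative (ZMod 2) →* M,
      f (Multiplicative.ofAdd 0) = 1 ∧ f (Multiplicative.ofAdd 1) = x := by
  have h2 : (zmultiplesHom (Additive M) (Additive.ofMul x)) ((2 : ℕ) : ℤ) = 0 := by
    show ((2 : ℤ) • Additive.ofMul x) = 0
    rw [← ofMul_zpow]
    have : x ^ (2 : ℤ) = 1 := by rw [zpow_two, hx]
    rw [this]; rfl
  set φ : ZMod 2 →+ Additive M := ZMod.lift 2 ⟨_, h2⟩ with hφ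
  refine ⟨AddMonoidHom.toMultiplicativeLeft φ, by simp, ?_⟩
  show Additive.toMul (φ (Multiplicative.toAdd (Multiplicative.ofAdd (1 : ZMod 2)))) = x
  rw [toAdd_ofAdd]
  have e1 : ((1 : ZMod 2)) = (((1 : ℤ) : ZMod 2)) := by norm_num
  rw [e1, hφ, ZMod.lift_coe]
  show Additive.toMul ((1 : ℤ) • Additive.ofMul x) = x
  rw [one_zsmul, toMul_ofMul]

open DihedralGroup in
/-- index of a rotation -/
def rotIdx {n : ℕ} : DihedralGroup n → ZMod n
  | .r i => i
  | .sr i => i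


open DihedralGroup in
lemma isCyclic_of_all_rot {n : ℕ} [NeZero n] {G : Type} [Group G] (f : G →* DihedralGroup n)
    (hf : Function.Injective f) (hall : ∀ x, ∃ i : ZMod n, f x = r i) : IsCyclic G := by
  have hinj : Function.Injective (fun x : G => Multiplicative.ofAdd (rotIdx (f x))) := by
    intro x y hxy
    obtain ⟨i, hi⟩ := hall x
    obtain ⟨j, hj⟩ := hall y
    simp only [hi, hj, rotIdx] at hxy
    have : i = j := by exact_mod_cast Multiplicative.ofAdd.injective hxy
    exact hf (by rw [hi, hj, this])
  set φ : G →* Multiplicative (ZMod n) :=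
    { toFun := fun x => Multiplicative.ofAdd (rotIdx (f x))
      map_one' := by
        have h1 : f 1 = r 0 := by rw [map_one]; rfl
        simp only [h1, rotIdx]; rfl
      map_mul' := by
        intro x y
        obtain ⟨i, hi⟩ := hall x
        obtain ⟨j, hj⟩ := hall y
        have hxy : f (x * y) = r (i + j) := by rw [map_mul, hi, hj, r_mul_r]
        simp only [hxy, hi, hj, rotIdx]
        rfl } with hφdef
  have hinj' : Function.Injective φ := hinj
  exact isCyclic_of_surjective _ (MonoidHom.ofInjective hinj').symm.surjective

open DihedralGroup in
theorem main_classify (n : ℕ) (hn : 0 < n) (H : Subgroup (DihedralGroup n))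
    (hK : ¬ ∃ K : Subgroup (DihedralGroup n), K ≤ H ∧
      Nonempty (K ≃* (Multiplicative (ZMod 2) × Multiplicative (ZMod 2)))) :
    (IsCyclic H) ∨
    (∃ (K : Subgroup ↥H) (s₀ : ↥H), IsCyclic K ∧ Odd (Nat.card K) ∧ s₀ * s₀ = 1 ∧
      (∀ k : ↥H, k ∈ K → s₀ * k * s₀ = k⁻¹) ∧ (∀ g : ↥H, g ∈ K ∨ g * s₀ ∈ K)) := by
  classical
  haveI : NeZero n := ⟨hn.ne'⟩
  by_cases hc : ∀ x : ↥H, ∃ i : ZMod n, (x : DihedralGroup n) = r i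
  · left
    exact isCyclic_of_all_rot H.subtype Subtype.coe_injective hc
  · right
    push_neg at hc
    obtain ⟨x₀, hx₀⟩ := hc
    obtain ⟨j₀, hj₀⟩ : ∃ j, (x₀ : DihedralGroup n) = sr j := by
      cases h : (x₀ : DihedralGroup n) with
      | r i => exact absurd h (hx₀ i)
      | sr j => exact ⟨j, rfl⟩
    set K : Subgroup ↥H :=
      { carrier := {x : ↥H | ∃ i : ZMod n, (x : DihedralGroup n) = r i}
        one_mem' := ⟨0, rfl⟩
        mul_mem' := by
          rintro x y ⟨i, hi⟩ ⟨j, hj⟩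
          exact ⟨i + j, by rw [Subgroup.coe_mul, hi, hj, r_mul_r]⟩
        inv_mem' := by
          rintro x ⟨i, hi⟩
          refine ⟨-i, ?_⟩
          have h1 : ((x⁻¹ : ↥H) : DihedralGroup n) = ((x : DihedralGroup n))⁻¹ := rfl
          have h2 : (r i : DihedralGroup n)⁻¹ = r (-i) := by
            refine inv_eq_of_mul_eq_one_right ?_
            rw [r_mul_r, add_neg_cancel]; rfl
          rw [h1, hi, h2] } with hKdef
    have hmemK : ∀ x : ↥H, x ∈ K ↔ ∃ i : ZMod n, (x : DihedralGroup n) = r i :=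
      fun x => Iff.rfl
    haveI : Finite (DihedralGroup n) := inferInstance
    haveI hcycK : IsCyclic ↥K := by
      refine isCyclic_of_all_rot (H.subtype.comp K.subtype) ?_ ?_
      · exact Subtype.coe_injective.comp Subtype.coe_injective
      · intro x; exact ((hmemK (x : ↥H)).mp x.2)
    -- Odd cardinality
    have hodd : Odd (Nat.card ↥K) := by
      by_contra hoddn
      haveI := Fintype.ofFinite ↥K
      have heven : 2 ∣ Fintype.card ↥K := by
        rw [← Nat.card_eq_fintype_card]
        exact (Nat.not_odd_iff_even.mp hoddn).two_dvd
      obtain ⟨ρ, hρ⟩ := exists_prime_orderOf_dvd_card 2 heven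
      have hρsq : ρ * ρ = 1 := by rw [← pow_two, ← hρ, pow_orderOf_eq_one]
      have hρne : ρ ≠ 1 := by
        intro h1; rw [h1, orderOf_one] at hρ; norm_num at hρ
      set ρ' : DihedralGroup n := ((ρ : ↥H) : DihedralGroup n) with hρ'def
      obtain ⟨a, ha⟩ := (hmemK (ρ : ↥H)).mp ρ.2
      have hρ'sq : ρ' * ρ' = 1 := by
        have := congrArg (fun z : ↥K => ((z : ↥H) : DihedralGroup n)) hρsq
        simpa using this
      have hρ'ne : ρ' ≠ 1 := by
        intro h1
        have h2 : ((ρ : ↥H) : DihedralGroup n) = (((1 : ↥K) : ↥H) : DihedralGroup n) := by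
          rw [← hρ'def, h1]; rfl
        exact hρne (Subtype.coe_injective (Subtype.coe_injective h2))
      have hρ'2 : ρ' = r a := by rw [hρ'def, ha]
      set s₁ : DihedralGroup n := (x₀ : DihedralGroup n) with hs₁def
      have haa : a + a = 0 := by
        have h1 : (r (a + a) : DihedralGroup n) = r 0 := by
          rw [← r_mul_r, ← hρ'2, hρ'sq]; rfl
        exact r.inj h1
      have hcommute : ρ' * s₁ = s₁ * ρ' := by
        rw [hρ'2, hj₀, r_mul_sr, sr_mul_r]
        congr 1
        have hnega : -a = a := neg_eq_of_add_eq_zero_left haa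
        rw [sub_eq_add_neg, hnega]
      have hs₁sq : s₁ * s₁ = 1 := by rw [hj₀, sr_mul_sr, sub_self]; rfl
      obtain ⟨f₁, hf₁0, hf₁1⟩ := hom_of_sq_one ρ' hρ'sq
      obtain ⟨f₂, hf₂0, hf₂1⟩ := hom_of_sq_one s₁ hs₁sq
      have hcases : ∀ z : Multiplicative (ZMod 2),
          z = Multiplicative.ofAdd 0 ∨ z = Multiplicative.ofAdd 1 := by decide
      have hcomm : ∀ m b, Commute (f₁ m) (f₂ b) := by
        intro m b
        rcases hcases m with hm | hm <;> rcases hcases b with hb | hb <;>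
          rw [hm, hb] <;> simp only [hf₁0, hf₁1, hf₂0, hf₂1]
        · exact Commute.one_left 1
        · exact Commute.one_left s₁
        · exact Commute.one_right ρ'
        · exact hcommute
      set φ2 := MonoidHom.noncommCoprod f₁ f₂ hcomm with hφ2def
      have hinj2 : Function.Injective φ2 := by
        rw [injective_iff_map_eq_one]
        rintro ⟨m, b⟩ h1
        rw [hφ2def, MonoidHom.noncommCoprod_apply] at h1
        rcases hcases m with hm | hm <;> rcases hcases b with hb | hb <;>
            rw [hm, hb] at h1 ⊢ <;> simp only [hf₁0, hf₁1, hf₂0, hf₂1] at h1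
        · rfl
        · rw [one_mul] at h1
          rw [hj₀] at h1
          exact absurd h1 (by intro h; rw [one_def] at h; cases h)
        · rw [mul_one] at h1
          exact absurd h1 hρ'ne
        · rw [hρ'2, hj₀, r_mul_sr, one_def] at h1
          exact absurd h1 (by intro h; cases h)
      have hle : φ2.range ≤ H := by
        rintro z ⟨⟨m, b⟩, rfl⟩
        rw [hφ2def, MonoidHom.noncommCoprod_apply]
        have hm1 : f₁ m ∈ H := by
          rcases hcases m with hm | hm <;> rw [hm]
          · rw [hf₁0]; exact one_mem H
          · rw [hf₁1, hρ'def]; exact SetLike.coe_mem _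
        have hb1 : f₂ b ∈ H := by
          rcases hcases b with hb | hb <;> rw [hb]
          · rw [hf₂0]; exact one_mem H
          · rw [hf₂1, hs₁def]; exact SetLike.coe_mem _
        exact mul_mem hm1 hb1
      exact hK ⟨φ2.range, hle, ⟨(MonoidHom.ofInjective hinj2).symm⟩⟩
    refine ⟨K, x₀, hcycK, hodd, ?_, ?_, ?_⟩
    · -- x₀ * x₀ = 1
      apply Subtype.ext
      rw [Subgroup.coe_mul, hj₀, sr_mul_sr, sub_self]
      rfl
    · -- conjugation
      intro k hk
      obtain ⟨i, hi⟩ := (hmemK k).mp hk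
      apply Subtype.ext
      have h2 : (r i : DihedralGroup n)⁻¹ = r (-i) := by
        refine inv_eq_of_mul_eq_one_right ?_
        rw [r_mul_r, add_neg_cancel]; rfl
      rw [Subgroup.coe_mul, Subgroup.coe_mul, hj₀, hi]
      have h3 : ((k⁻¹ : ↥H) : DihedralGroup n) = ((k : ↥H) : DihedralGroup n)⁻¹ := rfl
      rw [h3, hi, h2, sr_mul_r, sr_mul_sr]
      congr 1
      ring
    · -- cover
      intro g
      cases h : (g : DihedralGroup n) with
      | r i => exact Or.inl ((hmemK g).mpr ⟨i, h⟩)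
      | sr i =>
          refine Or.inr ((hmemK _).mpr ⟨j₀ - i, ?_⟩)
          rw [Subgroup.coe_mul, h, hj₀, sr_mul_sr]


lemma splits_of_norm
    (hw : ∀ c : Cocyc G Circ, ∃ u : G → Circ, ∀ g h, c.w g h = u (g * h) - u g - u h) :
    Splits G := by
  intro w hcoc
  have hc : ∀ g h k : G, (w h k - w 1 1) - (w (g * h) k - w 1 1) + (w g (h * k) - w 1 1)
      - (w g h - w 1 1) = 0 := by
    intro g h k
    have h1 : (w h k - w 1 1) - (w (g * h) k - w 1 1) + (w g (h * k) - w 1 1) - (w g h - w 1 1)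
        = w h k - w (g * h) k + w g (h * k) - w g h := by abel
    rw [h1]; exact hcoc g h k
  obtain ⟨u', hu'⟩ := hw ⟨fun g h => w g h - w 1 1, hc, by show w 1 1 - w 1 1 = 0; rw [sub_self]⟩
  refine ⟨fun g => u' g - w 1 1, fun g h => ?_⟩
  have h2 : w g h - w 1 1 = u' (g * h) - u' g - u' h := hu' g h
  show w g h = (u' (g * h) - w 1 1) - (u' g - w 1 1) - (u' h - w 1 1)
  calc w g h = (w g h - w 1 1) + w 1 1 := by abel
    _ = (u' (g * h) - u' g - u' h) + w 1 1 := by rw [h2]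
    _ = (u' (g * h) - w 1 1) - (u' g - w 1 1) - (u' h - w 1 1) := by abel

lemma splits_of_isCyclic' (G : Type) [Group G] [Finite G] [IsCyclic G] : Splits G :=
  splits_of_norm (fun c => c.split_of_isCyclic (fun k hk a => circ_div k hk a))

lemma splits_dihedral_case (G : Type) [Group G] [Finite G] (K : Subgroup G) [IsCyclic K]
    (hodd : Odd (Nat.card K)) (s₀ : G) (hs : s₀ * s₀ = 1)
    (hconj : ∀ k : G, k ∈ K → s₀ * k * s₀ = k⁻¹)
    (hcover : ∀ g : G, g ∈ K ∨ g * s₀ ∈ K) : Splits G :=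
  splits_of_norm (fun c => c.split_dihedral (fun k hk a => circ_div k hk a) K hodd s₀ hs hconj hcover)


/-- The key exactness statement. -/
lemma exactAt3 [Finite G] (hS : Splits G) :
    (inhomogeneousCochains (Rep.trivial ℤ G ℤ)).ExactAt 3 := by
  haveI := Fintype.ofFinite G
  rw [HomologicalComplex.exactAt_iff' _ 2 3 4 (by simp) (by simp)]
  rw [ShortComplex.moduleCat_exact_iff]
  intro f3 hf3
  have hd34 : (inhomogeneousCochains (Rep.trivial ℤ G ℤ)).d 3 4 f3 = 0 := hf3
  rw [inhomogeneousCochains.d_def] at hd34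
  set F : G → G → G → ℤ := fun a b c => f3 ![a, b, c] with hF
  have hF3 : ∀ a b c d : G, D3 F a b c d = 0 := by
    intro a b c d
    have h1 := (d3_eval (G := G) f3 ![a, b, c, d]).symm.trans (congrFun hd34 ![a, b, c, d])
    exact h1
  obtain ⟨U, hU⟩ := int_cobound hS F hF3
  refine ⟨fun t => U (t 0) (t 1), ?_⟩
  show (inhomogeneousCochains (Rep.trivial ℤ G ℤ)).d 2 3 _ = f3
  rw [inhomogeneousCochains.d_def]
  funext g
  refine (d2_eval (G := G) (fun t => U (t 0) (t 1)) g).trans ?_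
  have hcur : (fun a b => (fun t : Fin 2 → G => U (t 0) (t 1)) ![a, b]) = U := by
    funext a b; simp
  rw [hcur, hU]
  have hg : (![g 0, g 1, g 2] : Fin 3 → G) = g := by
    funext i; fin_cases i <;> rfl
  show f3 ![g 0, g 1, g 2] = f3 g
  rw [hg]

lemma subsingleton_H3 [Finite G] (hS : Splits G) :
    Limits.IsZero (groupCohomology (Rep.trivial ℤ G ℤ) 3) := by
  have h := exactAt3 hS
  rw [HomologicalComplex.exactAt_iff_isZero_homology] at h
  exact h


end DRZ

/-- For `n` a positive integer, `G = Dₙ` the dihedral group of order `2n`, and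
`H ≤ G` a subgroup containing no Klein four-subgroup of `G` (no subgroup of `G` contained in
`H` is isomorphic to `ℤ/2ℤ × ℤ/2ℤ`), the restriction map `Res : H³(G, ℤ) → H³(H, ℤ)` is the
zero map (`ℤ` a trivial module). -/
theorem dihedral_res_zero_of_no_klein_subgroup (n : ℕ) (hn : 0 < n)
    (H : Subgroup (DihedralGroup n))
    (hK : ¬ ∃ K : Subgroup (DihedralGroup n), K ≤ H ∧
      Nonempty (K ≃* (Multiplicative (ZMod 2) × Multiplicative (ZMod 2)))) :
    ∀ x : groupCohomology (Rep.trivial ℤ (DihedralGroup n) ℤ) 3,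
      trivialCohMap ℤ H.subtype ℤ 3 x = 0 := by
  intro x
  haveI : NeZero n := ⟨hn.ne'⟩
  have hS : DRZ.Splits ↥H := by
    rcases DRZ.main_classify n hn H hK with hcyc | ⟨K, s₀, hcycK, hodd, hs, hconj, hcover⟩
    · haveI := hcyc
      exact DRZ.splits_of_isCyclic' ↥H
    · haveI := hcycK
      exact DRZ.splits_dihedral_case ↥H K hodd s₀ hs hconj hcover
  have hz := DRZ.subsingleton_H3 hS
  have h1 : (𝟙 (groupCohomology (Rep.trivial ℤ ↥H ℤ) 3)) = 0 := hz.eq_of_src _ _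
  calc trivialCohMap ℤ H.subtype ℤ 3 x
      = (𝟙 (groupCohomology (Rep.trivial ℤ ↥H ℤ) 3)) (trivialCohMap ℤ H.subtype ℤ 3 x) := rfl
    _ = (0 : groupCohomology (Rep.trivial ℤ ↥H ℤ) 3 ⟶ groupCohomology (Rep.trivial ℤ ↥H ℤ) 3)
        (trivialCohMap ℤ H.subtype ℤ 3 x) := by rw [h1]
    _ = 0 := rfl
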